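/- Let Φ(S) = 4·(s₂₂/(s₁₁s₂₂ − s₁₂² + s₂₂²))² · (1/s₃₃) viewed as a rational function of (s₁₁,s₁₂,s₂₂,s₃₃). Setting K = −∇ log Φ (with off-diagonal derivative convention (∇f)₁₂ = (1/2)∂f/∂s₁₂, and with κ₁₃ = κ₂₃ = 0), the 3×3 determinant κ₃₃(κ₁₁κ₂₂ − κ₁₂²) equals Φ(S) as rational functions. -/

import Mathlib

/-- `Φ(S) = 4·(s₂₂/(s₁₁s₂₂ − s₁₂² + s₂₂²))² · (1/s₃₃)`. -/
noncomputable def Phi13 (s11 s12 s22 s33 : ℂ) : ℂ :=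
  4 * (s22 / (s11 * s22 - s12 ^ 2 + s22 ^ 2)) ^ 2 * (1 / s33)


private lemma auxne (D s22 s33 : ℂ) (hD : D ≠ 0) (h22 : s22 ≠ 0) (h33 : s33 ≠ 0) :
    (4 * (s22 / D) ^ 2 * (1 / s33)) ≠ 0 :=
  mul_ne_zero (mul_ne_zero (by norm_num) (pow_ne_zero _ (div_ne_zero h22 hD)))
    (one_div_ne_zero h33)

private lemma aux11 (D s22 s33 : ℂ) (hD : D ≠ 0) (h22 : s22 ≠ 0) (h33 : s33 ≠ 0) :
    -(-8 * s22 ^ 3 / (D ^ 3 * s33)) / (4 * (s22 / D) ^ 2 * (1 / s33)) = 2 * s22 / D := by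
  rw [div_eq_div_iff (auxne D s22 s33 hD h22 h33) hD]
  field_simp
  ring

private lemma aux12 (D s12 s22 s33 : ℂ) (hD : D ≠ 0) (h22 : s22 ≠ 0) (h33 : s33 ≠ 0) :
    -((1 / 2 : ℂ) * (16 * s12 * s22 ^ 2 / (D ^ 3 * s33))) / (4 * (s22 / D) ^ 2 * (1 / s33))
      = -2 * s12 / D := by
  rw [div_eq_div_iff (auxne D s22 s33 hD h22 h33) hD]
  field_simp
  ring

private lemma aux22 (D s11 s22 s33 : ℂ) (hD : D ≠ 0) (h22 : s22 ≠ 0) (h33 : s33 ≠ 0) :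
    -((8 * s22 * D - 8 * s22 ^ 2 * (s11 + 2 * s22)) / (D ^ 3 * s33)) /
        (4 * (s22 / D) ^ 2 * (1 / s33))
      = (2 * s22 * (s11 + 2 * s22) - 2 * D) / (s22 * D) := by
  rw [div_eq_div_iff (auxne D s22 s33 hD h22 h33) (mul_ne_zero h22 hD)]
  field_simp
  ring

private lemma aux33 (D s22 s33 : ℂ) (hD : D ≠ 0) (h22 : s22 ≠ 0) (h33 : s33 ≠ 0) :
    -(-(4 * (s22 / D) ^ 2) / s33 ^ 2) / (4 * (s22 / D) ^ 2 * (1 / s33)) = 1 / s33 := by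
  rw [div_eq_div_iff (auxne D s22 s33 hD h22 h33) h33]
  field_simp

private lemma auxfin (D s11 s12 s22 s33 : ℂ) (hD : D ≠ 0) (h22 : s22 ≠ 0) (h33 : s33 ≠ 0)
    (hDeq : D = s11 * s22 - s12 ^ 2 + s22 ^ 2) :
    (1 / s33) * ((2 * s22 / D) * ((2 * s22 * (s11 + 2 * s22) - 2 * D) / (s22 * D))
        - (-2 * s12 / D) ^ 2)
      = 4 * (s22 / D) ^ 2 * (1 / s33) := by
  have h2' : 2 * s22 * (s11 + 2 * s22) - 2 * D = 2 * s12 ^ 2 + 2 * s22 ^ 2 := by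
    rw [hDeq]; ring
  rw [h2']
  field_simp
  ring_nf

set_option maxHeartbeats 2000000 in
/-- With `K = −∇ log Φ` (off-diagonal convention `(∇f)₁₂ = (1/2)∂f/∂s₁₂`, and
`κ₁₃ = κ₂₃ = 0`), the 3×3 determinant `κ₃₃(κ₁₁κ₂₂ − κ₁₂²)` equals `Φ(S)`. -/
theorem block_diagonal_homaloidal (s11 s12 s22 s33 : ℂ)
    (hD : s11 * s22 - s12 ^ 2 + s22 ^ 2 ≠ 0) (h22 : s22 ≠ 0) (h33 : s33 ≠ 0) :
    let Φ := Phi13 s11 s12 s22 s33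
    let κ11 := -(deriv (fun t => Phi13 t s12 s22 s33) s11) / Φ
    let κ12 := -((1 / 2 : ℂ) * deriv (fun t => Phi13 s11 t s22 s33) s12) / Φ
    let κ22 := -(deriv (fun t => Phi13 s11 s12 t s33) s22) / Φ
    let κ33 := -(deriv (fun t => Phi13 s11 s12 s22 t) s33) / Φ
    κ33 * (κ11 * κ22 - κ12 ^ 2) = Φ := by
  have h1 : HasDerivAt (fun t => Phi13 t s12 s22 s33)
      (-8 * s22 ^ 3 / ((s11 * s22 - s12 ^ 2 + s22 ^ 2) ^ 3 * s33)) s11 := by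
    simp only [Phi13]
    have hg : HasDerivAt (fun t : ℂ => t * s22 - s12 ^ 2 + s22 ^ 2) s22 s11 := by
      simpa using (((hasDerivAt_id s11).mul_const s22).sub_const (s12 ^ 2)).add_const (s22 ^ 2)
    have hq := (hasDerivAt_const s11 s22).div hg hD
    have h := ((hq.pow 2).const_mul (4 : ℂ)).mul_const (1 / s33)
    refine h.congr_deriv ?_
    simp only [Pi.div_apply, id, Nat.cast_ofNat, show (2:ℕ) - 1 = 1 from rfl, pow_one]
    field_simp
    ring
  have h2 : HasDerivAt (fun t => Phi13 s11 t s22 s33)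
      (16 * s12 * s22 ^ 2 / ((s11 * s22 - s12 ^ 2 + s22 ^ 2) ^ 3 * s33)) s12 := by
    simp only [Phi13]
    have hg : HasDerivAt (fun t : ℂ => s11 * s22 - t ^ 2 + s22 ^ 2) (-(2 * s12)) s12 := by
      simpa using ((hasDerivAt_pow 2 s12).const_sub (s11 * s22)).add_const (s22 ^ 2)
    have hq := (hasDerivAt_const s12 s22).div hg hD
    have h := ((hq.pow 2).const_mul (4 : ℂ)).mul_const (1 / s33)
    refine h.congr_deriv ?_
    simp only [Pi.div_apply, id, Nat.cast_ofNat, show (2:ℕ) - 1 = 1 from rfl, pow_one]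
    field_simp
    ring
  have h3 : HasDerivAt (fun t => Phi13 s11 s12 t s33)
      ((8 * s22 * (s11 * s22 - s12 ^ 2 + s22 ^ 2) - 8 * s22 ^ 2 * (s11 + 2 * s22)) /
        ((s11 * s22 - s12 ^ 2 + s22 ^ 2) ^ 3 * s33)) s22 := by
    simp only [Phi13]
    have hg : HasDerivAt (fun t : ℂ => s11 * t - s12 ^ 2 + t ^ 2) (s11 + 2 * s22) s22 := by
      have := (((hasDerivAt_id s22).const_mul s11).sub_const (s12 ^ 2)).add (hasDerivAt_pow 2 s22)
      simpa [Pi.add_def] using this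
    have hq := (hasDerivAt_id s22).div hg hD
    have h := ((hq.pow 2).const_mul (4 : ℂ)).mul_const (1 / s33)
    refine h.congr_deriv ?_
    simp only [Pi.div_apply, id, Nat.cast_ofNat, show (2:ℕ) - 1 = 1 from rfl, pow_one]
    field_simp
    ring
  have h4 : HasDerivAt (fun t => Phi13 s11 s12 s22 t)
      (-(4 * (s22 / (s11 * s22 - s12 ^ 2 + s22 ^ 2)) ^ 2) / s33 ^ 2) s33 := by
    simp only [Phi13]
    have h := (hasDerivAt_inv h33).const_mul (4 * (s22 / (s11 * s22 - s12 ^ 2 + s22 ^ 2)) ^ 2)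
    simp only [one_div]
    refine h.congr_deriv ?_
    ring
  have e11 : -(deriv (fun t => Phi13 t s12 s22 s33) s11) / Phi13 s11 s12 s22 s33
      = 2 * s22 / (s11 * s22 - s12 ^ 2 + s22 ^ 2) := by
    rw [h1.deriv]; simp only [Phi13]; exact aux11 _ _ _ hD h22 h33
  have e12 : -((1 / 2 : ℂ) * deriv (fun t => Phi13 s11 t s22 s33) s12) / Phi13 s11 s12 s22 s33
      = -2 * s12 / (s11 * s22 - s12 ^ 2 + s22 ^ 2) := by
    rw [h2.deriv]; simp only [Phi13]; exact aux12 _ _ _ _ hD h22 h33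
  have e22 : -(deriv (fun t => Phi13 s11 s12 t s33) s22) / Phi13 s11 s12 s22 s33
      = (2 * s22 * (s11 + 2 * s22) - 2 * (s11 * s22 - s12 ^ 2 + s22 ^ 2)) /
        (s22 * (s11 * s22 - s12 ^ 2 + s22 ^ 2)) := by
    rw [h3.deriv]; simp only [Phi13]; exact aux22 _ _ _ _ hD h22 h33
  have e33 : -(deriv (fun t => Phi13 s11 s12 s22 t) s33) / Phi13 s11 s12 s22 s33
      = 1 / s33 := by
    rw [h4.deriv]; simp only [Phi13]; exact aux33 _ _ _ hD h22 h33
  intro Φ κ11 κ12 κ22 κ33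
  simp only [Φ, κ11, κ12, κ22, κ33, e11, e12, e22, e33]
  simp only [Phi13]
  exact auxfin _ s11 s12 s22 s33 hD h22 h33 rfl
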